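/- Let ψ be analytic and nonvanishing on an annulus r < |ζ| < R with r < 1 < R, let z ∈ ℂ with |z| < 1, and set ψ_z(ζ) = ψ(ζ)/(1 − z/ζ). Then for all integers j, k ≥ 0, the series ∑_{m=0}^∞ [ (ψ_z^{−1})_{j+m+1}·(ψ_z)_{−m−k−1} − (ψ^{−1})_{j+m+1}·ψ_{−m−k−1} ] converges absolutely and its sum equals Q(j)·R(k), where Q(j) = (ψ^{−1})_{j+1} and R(k) = ∫_{|b|=1} b^{k+1} · (z/(b−z)) · ψ(b) db/(2πib). -/

import Mathlib

/-- The `k`-th Fourier coefficient of a function on the unit circle: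
`h_k = ∫_{|ζ|=1} ζ^{−k} h(ζ) dζ/(2πiζ) = (1/2π)∫_0^{2π} e^{−ikθ} h(e^{iθ}) dθ`. -/
noncomputable def fourierCoeff' (h : ℂ → ℂ) (k : ℤ) : ℂ :=
  (1 / (2 * Real.pi)) *
    ∫ θ in (0 : ℝ)..(2 * Real.pi),
      Complex.exp (-(Complex.I * k * θ)) * h (Complex.exp (Complex.I * θ))

open Complex intervalIntegral

lemma abs_exp_I_mul (θ : ℝ) : ‖Complex.exp (Complex.I * θ)‖ = 1 := by
  rw [mul_comm]; exact Complex.norm_exp_ofReal_mul_I θ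

lemma norm_exp_int (n : ℤ) (θ : ℝ) : ‖Complex.exp (-(Complex.I * n * θ))‖ = 1 := by
  simp [Complex.norm_exp]

lemma fc_zero (n : ℤ) : fourierCoeff' 0 n = 0 := by
  simp [fourierCoeff']

lemma fc_shift (h1 h2 h3 : ℂ → ℂ) (w : ℂ) (n : ℤ)
    (hc2 : Continuous fun θ : ℝ => h2 (Complex.exp (Complex.I * θ)))
    (hc3 : Continuous fun θ : ℝ => h3 (Complex.exp (Complex.I * θ)))
    (hpt : ∀ θ : ℝ, h1 (Complex.exp (Complex.I * θ)) =
      h2 (Complex.exp (Complex.I * θ)) +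
        w * (Complex.exp (Complex.I * θ))⁻¹ * h3 (Complex.exp (Complex.I * θ))) :
    fourierCoeff' h1 n = fourierCoeff' h2 n + w * fourierCoeff' h3 (n + 1) := by
  unfold fourierCoeff'
  have key : ∀ θ : ℝ,
      Complex.exp (-(Complex.I * n * θ)) * h1 (Complex.exp (Complex.I * θ)) =
      Complex.exp (-(Complex.I * n * θ)) * h2 (Complex.exp (Complex.I * θ)) +
        w * (Complex.exp (-(Complex.I * (n + 1 : ℤ) * θ)) *
          h3 (Complex.exp (Complex.I * θ))) := by
    intro θ
    rw [hpt θ, ← Complex.exp_neg]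
    have : Complex.exp (-(Complex.I * n * θ)) * Complex.exp (-(Complex.I * θ)) =
        Complex.exp (-(Complex.I * ((n : ℂ) + 1) * θ)) := by
      rw [← Complex.exp_add]; ring_nf
    push_cast
    rw [← this]; ring
  have hI2 : IntervalIntegrable
      (fun θ : ℝ => Complex.exp (-(Complex.I * n * θ)) * h2 (Complex.exp (Complex.I * θ)))
      MeasureTheory.volume 0 (2 * Real.pi) := by
    apply Continuous.intervalIntegrable
    exact (Complex.continuous_exp.comp (by continuity)).mul hc2
  have hI3 : IntervalIntegrable
      (fun θ : ℝ => w * (Complex.exp (-(Complex.I * (n + 1 : ℤ) * θ)) *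
        h3 (Complex.exp (Complex.I * θ)))) MeasureTheory.volume 0 (2 * Real.pi) := by
    apply Continuous.intervalIntegrable
    exact continuous_const.mul ((Complex.continuous_exp.comp (by continuity)).mul hc3)
  rw [intervalIntegral.integral_congr (g :=
    fun θ : ℝ => Complex.exp (-(Complex.I * n * θ)) * h2 (Complex.exp (Complex.I * θ)) +
      w * (Complex.exp (-(Complex.I * (n + 1 : ℤ) * θ)) * h3 (Complex.exp (Complex.I * θ))))
    (fun θ _ => key θ)]
  rw [intervalIntegral.integral_add hI2 hI3, intervalIntegral.integral_const_mul]
  ring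

lemma fc_norm_le (h : ℂ → ℂ) (n : ℤ) (C : ℝ) (hC : 0 ≤ C)
    (hb : ∀ θ : ℝ, ‖h (Complex.exp (Complex.I * θ))‖ ≤ C) :
    ‖fourierCoeff' h n‖ ≤ C := by
  unfold fourierCoeff'
  rw [norm_mul]
  have hπ : (0:ℝ) < 2 * Real.pi := by positivity
  have hb' : ∀ θ : ℝ,
      ‖Complex.exp (-(Complex.I * n * θ)) * h (Complex.exp (Complex.I * θ))‖ ≤ C := by
    intro θ
    rw [norm_mul, norm_exp_int, one_mul]; exact hb θ
  have := intervalIntegral.norm_integral_le_of_norm_le_const (C := C)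
    (f := fun θ : ℝ => Complex.exp (-(Complex.I * n * θ)) * h (Complex.exp (Complex.I * θ)))
    (a := 0) (b := 2 * Real.pi) (fun x _ => hb' x)
  calc ‖(1 / (2 * Real.pi) : ℂ)‖ * ‖∫ θ in (0:ℝ)..(2*Real.pi),
        Complex.exp (-(Complex.I * n * θ)) * h (Complex.exp (Complex.I * θ))‖
      ≤ ‖(1 / (2 * Real.pi) : ℂ)‖ * (C * |2 * Real.pi - 0|) := by
        apply mul_le_mul_of_nonneg_left _ (norm_nonneg _)
        exact this
    _ = C := by
        simp only [sub_zero, abs_of_pos hπ]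
        rw [norm_div, norm_one]
        have : ‖(2 * Real.pi : ℂ)‖ = 2 * Real.pi := by
          rw [show ((2:ℂ) * Real.pi) = ((2 * Real.pi : ℝ) : ℂ) by push_cast; ring]
          rw [Complex.norm_real, Real.norm_of_nonneg hπ.le]
        rw [this]; field_simp

lemma fc_eq_circleIntegral (h : ℂ → ℂ) (n : ℤ) :
    (∮ ζ in C((0:ℂ), 1), ζ ^ (-n - 1) * h ζ) = (2 * Real.pi * Complex.I) * fourierCoeff' h n := by
  have key : ∀ θ : ℝ, deriv (circleMap 0 1) θ • ((circleMap 0 1 θ) ^ (-n - 1) *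
      h (circleMap 0 1 θ)) =
      Complex.I * (Complex.exp (-(Complex.I * n * θ)) * h (Complex.exp (Complex.I * θ))) := by
    intro θ
    rw [deriv_circleMap]
    simp only [circleMap, zero_add, Complex.ofReal_one, one_mul, smul_eq_mul]
    rw [mul_comm (θ : ℂ) Complex.I]
    have h1 : Complex.exp (Complex.I * θ) ^ (-n - 1) =
        Complex.exp (((-n - 1 : ℤ) : ℂ) * (Complex.I * θ)) := by
      rw [Complex.exp_int_mul]
    rw [h1]
    rw [show Complex.I * (Complex.exp (-(Complex.I * n * θ)) * h (Complex.exp (Complex.I * θ)))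
      = (Complex.I * Complex.exp (-(Complex.I * n * θ))) * h (Complex.exp (Complex.I * θ)) by ring]
    have h2 : Complex.exp (Complex.I * θ) * Complex.I *
        Complex.exp (((-n - 1 : ℤ) : ℂ) * (Complex.I * θ)) =
        Complex.I * Complex.exp (-(Complex.I * n * θ)) := by
      rw [mul_comm (Complex.exp (Complex.I * θ)) Complex.I, mul_assoc, ← Complex.exp_add]
      congr 1
      push_cast
      ring
    rw [← h2]; ring
  unfold circleIntegral
  rw [intervalIntegral.integral_congr (g := fun θ : ℝ =>
    Complex.I * (Complex.exp (-(Complex.I * n * θ)) * h (Complex.exp (Complex.I * θ))))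
    (fun θ _ => key θ)]
  rw [intervalIntegral.integral_const_mul]
  unfold fourierCoeff'
  have hπ : ((Real.pi : ℂ)) ≠ 0 := by
    simp [Real.pi_ne_zero]
  field_simp

open Metric in
lemma fc_decay (r R : ℝ) (hr : r < 1) (hR : 1 < R) (ψ : ℂ → ℂ)
    (hψ : DifferentiableOn ℂ ψ {ζ : ℂ | r < ‖ζ‖ ∧ ‖ζ‖ < R})
    (hψ0 : ∀ ζ : ℂ, r < ‖ζ‖ → ‖ζ‖ < R → ψ ζ ≠ 0) (j : ℕ) :
    ∃ C : ℝ, 0 ≤ C ∧ ∀ m : ℕ,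
      ‖fourierCoeff' (fun ζ => (ψ ζ)⁻¹) ((j : ℤ) + m + 1)‖ ≤ C * (((1 + R) / 2)⁻¹) ^ m := by
  set ρ : ℝ := (1 + R) / 2 with hρdef
  have hρ1 : 1 < ρ := by rw [hρdef]; linarith
  have hρR : ρ < R := by rw [hρdef]; linarith
  have hρ0 : 0 < ρ := by linarith
  have hA : IsOpen {ζ : ℂ | r < ‖ζ‖ ∧ ‖ζ‖ < R} := by
    exact (isOpen_lt continuous_const continuous_norm).inter
      (isOpen_lt continuous_norm continuous_const)
  -- differentiability of the integrand on the closed annulus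
  have hdiff : ∀ (e : ℤ) (ζ : ℂ), 1 ≤ ‖ζ‖ → ‖ζ‖ ≤ ρ →
      DifferentiableAt ℂ (fun ξ => ξ ^ e * (ψ ξ)⁻¹) ζ := by
    intro e ζ h1 h2
    have hζ0 : ζ ≠ 0 := by
      intro h; rw [h] at h1; simp at h1; linarith
    have hmem : ζ ∈ {ζ : ℂ | r < ‖ζ‖ ∧ ‖ζ‖ < R} :=
      ⟨lt_of_lt_of_le (lt_of_lt_of_le hr h1) le_rfl, lt_of_le_of_lt h2 hρR⟩
    have hψd : DifferentiableAt ℂ ψ ζ := hψ.differentiableAt (hA.mem_nhds hmem)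
    exact (differentiableAt_zpow.mpr (Or.inl hζ0)).mul
      (hψd.inv (hψ0 ζ hmem.1 hmem.2))
  -- bound for ψ⁻¹ on the sphere of radius ρ
  have hcont : ContinuousOn (fun ζ : ℂ => (ψ ζ)⁻¹) (sphere (0 : ℂ) ρ) := by
    intro ζ hζ
    have hn : ‖ζ‖ = ρ := by rwa [mem_sphere_iff_norm, sub_zero] at hζ
    have := hdiff 0 ζ (by rw [hn]; exact hρ1.le)
      (by rw [hn])
    have : DifferentiableAt ℂ (fun ξ => (ψ ξ)⁻¹) ζ := by
      have h' := this
      simpa using h'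
    exact this.continuousAt.continuousWithinAt
  obtain ⟨C0, hC0⟩ := (isCompact_sphere (0 : ℂ) ρ).exists_bound_of_continuousOn hcont
  refine ⟨max C0 0, le_max_right _ _, fun m => ?_⟩
  set n : ℤ := (j : ℤ) + m + 1 with hn
  set C : ℝ := max C0 0 with hC
  set f : ℂ → ℂ := fun ζ => ζ ^ (-n - 1) * (ψ ζ)⁻¹ with hf
  -- contour shift
  have hshift : (∮ ζ in C((0:ℂ), ρ), f ζ) = ∮ ζ in C((0:ℂ), 1), f ζ := by
    apply Complex.circleIntegral_eq_of_differentiable_on_annulus_off_countable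
      one_pos hρ1.le Set.countable_empty
    · intro ζ hζ
      obtain ⟨h1, h2⟩ := hζ
      rw [mem_closedBall_zero_iff] at h1
      rw [mem_ball_zero_iff, not_lt] at h2
      exact (hdiff (-n - 1) ζ h2
        h1).continuousAt.continuousWithinAt
    · intro ζ hζ
      obtain ⟨⟨h1, h2⟩, -⟩ := hζ
      rw [mem_ball_zero_iff] at h1
      rw [mem_closedBall_zero_iff, not_le] at h2
      exact hdiff (-n - 1) ζ h2.le
        h1.le
  -- norm bound on the shifted contour
  have hbound : ‖∮ ζ in C((0:ℂ), ρ), f ζ‖ ≤ 2 * Real.pi * ρ * (ρ ^ (-n - 1) * C) := by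
    apply circleIntegral.norm_integral_le_of_norm_le_const hρ0.le
    intro ζ hζ
    have hnζ : ‖ζ‖ = ρ := by rwa [mem_sphere_iff_norm, sub_zero] at hζ
    rw [hf, norm_mul, norm_zpow, hnζ]
    apply mul_le_mul_of_nonneg_left _ (zpow_nonneg hρ0.le _)
    exact le_trans (hC0 ζ hζ) (le_max_left _ _)
  have hcirc := fc_eq_circleIntegral (fun ζ => (ψ ζ)⁻¹) n
  have hπ : (0:ℝ) < 2 * Real.pi := by positivity
  have hnorm : 2 * Real.pi * ‖fourierCoeff' (fun ζ => (ψ ζ)⁻¹) n‖ =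
      ‖∮ ζ in C((0:ℂ), 1), f ζ‖ := by
    rw [hcirc, norm_mul]
    congr 1
    rw [norm_mul, Complex.norm_I, mul_one,
      show ((2:ℂ) * Real.pi) = ((2 * Real.pi : ℝ) : ℂ) by push_cast; ring,
      Complex.norm_real, Real.norm_of_nonneg hπ.le]
  have key : ‖fourierCoeff' (fun ζ => (ψ ζ)⁻¹) n‖ ≤ C * ρ ^ (-n) := by
    have h1 : 2 * Real.pi * ‖fourierCoeff' (fun ζ => (ψ ζ)⁻¹) n‖ ≤
        2 * Real.pi * (ρ * (ρ ^ (-n - 1) * C)) := by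
      rw [hnorm, ← hshift]
      calc ‖∮ ζ in C((0:ℂ), ρ), f ζ‖ ≤ 2 * Real.pi * ρ * (ρ ^ (-n - 1) * C) := hbound
        _ = 2 * Real.pi * (ρ * (ρ ^ (-n - 1) * C)) := by ring
    have h2 := le_of_mul_le_mul_left h1 hπ
    refine h2.trans (le_of_eq ?_)
    rw [show (-n - 1 : ℤ) = -n + (-1) by ring, zpow_add₀ (ne_of_gt hρ0), zpow_neg_one]
    field_simp
  refine le_trans key ?_
  apply mul_le_mul_of_nonneg_left _ (le_max_right C0 0)
  have h3 : ρ ^ (-n) = (ρ⁻¹) ^ (j + m + 1 : ℕ) := by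
    have hcast : n = ((j + m + 1 : ℕ) : ℤ) := by rw [hn]; push_cast; ring
    rw [hcast, zpow_neg, ← inv_zpow, zpow_natCast]
  rw [h3]
  apply pow_le_pow_of_le_one (by positivity) (inv_le_one_of_one_le₀ hρ1.le)
  omega

/-- for `ψ` analytic and nonvanishing on an annulus containing the unit circle,
`|z| < 1` and `ψ_z(ζ) = ψ(ζ)/(1 − z/ζ)`, the series
`∑_m [(ψ_z^{−1})_{j+m+1}(ψ_z)_{−m−k−1} − (ψ^{−1})_{j+m+1}ψ_{−m−k−1}]` converges absolutely
with sum `Q(j)·R(k)`, where `Q(j) = (ψ^{−1})_{j+1}` and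
`R(k) = ∫_{|b|=1} b^{k+1}·(z/(b−z))·ψ(b) db/(2πib)`. -/
theorem rank_one_perturbation_identity (r R : ℝ) (hr : r < 1) (hR : 1 < R)
    (ψ : ℂ → ℂ)
    (hψ : DifferentiableOn ℂ ψ {ζ : ℂ | r < ‖ζ‖ ∧ ‖ζ‖ < R})
    (hψ0 : ∀ ζ : ℂ, r < ‖ζ‖ → ‖ζ‖ < R → ψ ζ ≠ 0)
    (z : ℂ) (hz : ‖z‖ < 1) (j k : ℕ) :
    Summable (fun m : ℕ =>
      ‖fourierCoeff' (fun ζ => (1 - z / ζ) / ψ ζ) ((j : ℤ) + m + 1) *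
            fourierCoeff' (fun ζ => ψ ζ / (1 - z / ζ)) (-((m : ℤ) + k + 1)) -
          fourierCoeff' (fun ζ => (ψ ζ)⁻¹) ((j : ℤ) + m + 1) *
            fourierCoeff' ψ (-((m : ℤ) + k + 1))‖) ∧
    (∑' m : ℕ,
        (fourierCoeff' (fun ζ => (1 - z / ζ) / ψ ζ) ((j : ℤ) + m + 1) *
            fourierCoeff' (fun ζ => ψ ζ / (1 - z / ζ)) (-((m : ℤ) + k + 1)) -
          fourierCoeff' (fun ζ => (ψ ζ)⁻¹) ((j : ℤ) + m + 1) *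
            fourierCoeff' ψ (-((m : ℤ) + k + 1)))) =
      fourierCoeff' (fun ζ => (ψ ζ)⁻¹) ((j : ℤ) + 1) *
        fourierCoeff' (fun b => z / (b - z) * ψ b) (-((k : ℤ) + 1)) := by
  have hAopen : IsOpen {ζ : ℂ | r < ‖ζ‖ ∧ ‖ζ‖ < R} :=
    (isOpen_lt continuous_const continuous_norm).inter
      (isOpen_lt continuous_norm continuous_const)
  -- basic facts about points on the unit circle
  have habs : ∀ θ : ℝ, ‖Complex.exp (Complex.I * θ)‖ = 1 := abs_exp_I_mul
  have he0 : ∀ θ : ℝ, Complex.exp (Complex.I * θ) ≠ 0 := fun θ => Complex.exp_ne_zero _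
  have hemem : ∀ θ : ℝ, Complex.exp (Complex.I * θ) ∈
      {ζ : ℂ | r < ‖ζ‖ ∧ ‖ζ‖ < R} := by
    intro θ; exact ⟨by rw [habs]; exact hr, by rw [habs]; exact hR⟩
  have hψne : ∀ θ : ℝ, ψ (Complex.exp (Complex.I * θ)) ≠ 0 := fun θ =>
    hψ0 _ (hemem θ).1 (hemem θ).2
  have hone : ∀ ζ : ℂ, ‖ζ‖ = 1 → (1 : ℂ) - z / ζ ≠ 0 := by
    intro ζ hζ h
    have h1 : z / ζ = 1 := by
      have := sub_eq_zero.mp h; exact this.symm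
    have : ‖z / ζ‖ = ‖z‖ / 1 := by rw [norm_div, hζ]
    rw [h1] at this
    simp at this
    rw [this] at hz
    exact lt_irrefl _ hz
  have hezne : ∀ ζ : ℂ, ‖ζ‖ = 1 → ζ - z ≠ 0 := by
    intro ζ hζ h
    have : ζ = z := sub_eq_zero.mp h
    rw [← this] at hz; rw [hζ] at hz; exact lt_irrefl _ hz
  -- continuity facts
  have hexpc : Continuous fun θ : ℝ => Complex.exp (Complex.I * θ) := by continuity
  have hψc : Continuous fun θ : ℝ => ψ (Complex.exp (Complex.I * θ)) :=
    hψ.continuousOn.comp_continuous hexpc hemem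
  have hψinvc : Continuous fun θ : ℝ => (ψ (Complex.exp (Complex.I * θ)))⁻¹ :=
    hψc.inv₀ hψne
  have honec : Continuous fun θ : ℝ => (1 : ℂ) - z / Complex.exp (Complex.I * θ) :=
    continuous_const.sub (continuous_const.div hexpc he0)
  have hψzc : Continuous fun θ : ℝ =>
      ψ (Complex.exp (Complex.I * θ)) / (1 - z / Complex.exp (Complex.I * θ)) :=
    hψc.div honec (fun θ => hone _ (habs θ))
  -- the three coefficient identities
  have hA : ∀ n : ℤ, fourierCoeff' (fun ζ => (1 - z / ζ) / ψ ζ) n =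
      fourierCoeff' (fun ζ => (ψ ζ)⁻¹) n + (-z) * fourierCoeff' (fun ζ => (ψ ζ)⁻¹) (n + 1) := by
    intro n
    apply fc_shift _ _ _ _ _ hψinvc hψinvc
    intro θ
    have h1 := he0 θ
    have h2 := hψne θ
    field_simp
    ring
  have hB : ∀ l : ℤ, fourierCoeff' ψ l =
      fourierCoeff' (fun ζ => ψ ζ / (1 - z / ζ)) l +
        (-z) * fourierCoeff' (fun ζ => ψ ζ / (1 - z / ζ)) (l + 1) := by
    intro l
    apply fc_shift _ _ _ _ _ hψzc hψzc
    intro θ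
    have h1 := hone _ (habs θ)
    have h2 := he0 θ
    have h3 := hezne _ (habs θ)
    have h4 := hψne θ
    field_simp
    ring
  have hCid : ∀ l : ℤ, fourierCoeff' (fun b => z / (b - z) * ψ b) l =
      z * fourierCoeff' (fun ζ => ψ ζ / (1 - z / ζ)) (l + 1) := by
    intro l
    have := fc_shift (fun b => z / (b - z) * ψ b) 0
      (fun ζ => ψ ζ / (1 - z / ζ)) z l continuous_const hψzc ?_
    · rw [this, fc_zero, zero_add]
    · intro θ
      have h1 := hone _ (habs θ)
      have h2 := he0 θ
      have h3 := hezne _ (habs θ)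
      simp only [Pi.zero_apply, zero_add]
      field_simp
  -- abbreviations
  set c : ℤ → ℂ := fun n => fourierCoeff' (fun ζ => (ψ ζ)⁻¹) n with hc
  set b : ℤ → ℂ := fun l => fourierCoeff' (fun ζ => ψ ζ / (1 - z / ζ)) l with hb
  set u : ℕ → ℂ := fun m => c ((j : ℤ) + m + 1) * b (-((m : ℤ) + k)) with hu
  -- the telescoping identity for each term
  have ht : ∀ m : ℕ,
      fourierCoeff' (fun ζ => (1 - z / ζ) / ψ ζ) ((j : ℤ) + m + 1) *
          fourierCoeff' (fun ζ => ψ ζ / (1 - z / ζ)) (-((m : ℤ) + k + 1)) -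
        fourierCoeff' (fun ζ => (ψ ζ)⁻¹) ((j : ℤ) + m + 1) *
          fourierCoeff' ψ (-((m : ℤ) + k + 1)) = z * (u m - u (m + 1)) := by
    intro m
    have e1 : ((j : ℤ) + (m + 1 : ℕ) + 1) = ((j : ℤ) + m + 1) + 1 := by push_cast; ring
    have e2 : (-(((m + 1 : ℕ) : ℤ) + k)) = -((m : ℤ) + k + 1) := by push_cast; ring
    have e3 : (-((m : ℤ) + k + 1) + 1) = -((m : ℤ) + k) := by ring
    rw [hA ((j : ℤ) + m + 1), hB (-((m : ℤ) + k + 1))]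
    simp only [hu, e1, e2, e3]
    ring
  -- bounds
  obtain ⟨Cd, hCd0, hCd⟩ := fc_decay r R hr hR ψ hψ hψ0 j
  set q : ℝ := ((1 + R) / 2)⁻¹ with hq
  have hq0 : 0 ≤ q := by rw [hq]; positivity
  have hq1 : q < 1 := by
    rw [hq, inv_lt_one_iff₀]; right; linarith
  -- bound for b
  have hψzco : ContinuousOn (fun ζ : ℂ => ψ ζ / (1 - z / ζ)) (Metric.sphere (0 : ℂ) 1) := by
    intro ζ hζ
    have hn : ‖ζ‖ = 1 := by
      rwa [mem_sphere_iff_norm, sub_zero] at hζ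
    have hmem : ζ ∈ {ζ : ℂ | r < ‖ζ‖ ∧ ‖ζ‖ < R} :=
      ⟨by rw [hn]; exact hr, by rw [hn]; exact hR⟩
    have hζ0 : ζ ≠ 0 := by
      intro h; rw [h] at hn; simp at hn
    have : ContinuousAt (fun ζ : ℂ => ψ ζ / (1 - z / ζ)) ζ := by
      apply ContinuousAt.div
      · exact (hψ.differentiableAt (hAopen.mem_nhds hmem)).continuousAt
      · exact continuousAt_const.sub (continuousAt_const.div continuousAt_id hζ0)
      · exact hone ζ hn
    exact this.continuousWithinAt
  obtain ⟨Cb0, hCb0⟩ := (isCompact_sphere (0 : ℂ) 1).exists_bound_of_continuousOn hψzco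
  set Cb : ℝ := max Cb0 0 with hCbdef
  have hCb : ∀ l : ℤ, ‖b l‖ ≤ Cb := by
    intro l
    apply fc_norm_le _ _ _ (le_max_right _ _)
    intro θ
    have : Complex.exp (Complex.I * θ) ∈ Metric.sphere (0 : ℂ) 1 := by
      rw [mem_sphere_iff_norm, sub_zero, habs]
    exact le_trans (hCb0 _ this) (le_max_left _ _)
  have hub : ∀ m : ℕ, ‖u m‖ ≤ Cd * Cb * q ^ m := by
    intro m
    rw [hu]
    calc ‖c ((j : ℤ) + m + 1) * b (-((m : ℤ) + k))‖
        = ‖c ((j : ℤ) + m + 1)‖ * ‖b (-((m : ℤ) + k))‖ := norm_mul _ _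
      _ ≤ (Cd * q ^ m) * Cb := by
          apply mul_le_mul (hCd m) (hCb _) (norm_nonneg _) (by positivity)
      _ = Cd * Cb * q ^ m := by ring
  have hCb0' : (0:ℝ) ≤ Cb := le_max_right _ _
  -- summability
  have hbound : ∀ m : ℕ, ‖z * (u m - u (m + 1))‖ ≤ ‖z‖ * (Cd * Cb * (1 + q)) * q ^ m := by
    intro m
    rw [norm_mul]
    calc ‖z‖ * ‖u m - u (m + 1)‖ ≤ ‖z‖ * (‖u m‖ + ‖u (m + 1)‖) := by
          apply mul_le_mul_of_nonneg_left (norm_sub_le _ _) (norm_nonneg _)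
      _ ≤ ‖z‖ * (Cd * Cb * q ^ m + Cd * Cb * q ^ (m + 1)) := by
          apply mul_le_mul_of_nonneg_left (add_le_add (hub m) (hub (m + 1))) (norm_nonneg _)
      _ = ‖z‖ * (Cd * Cb * (1 + q)) * q ^ m := by ring
  have hsummable : Summable (fun m : ℕ =>
      ‖fourierCoeff' (fun ζ => (1 - z / ζ) / ψ ζ) ((j : ℤ) + m + 1) *
            fourierCoeff' (fun ζ => ψ ζ / (1 - z / ζ)) (-((m : ℤ) + k + 1)) -
          fourierCoeff' (fun ζ => (ψ ζ)⁻¹) ((j : ℤ) + m + 1) *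
            fourierCoeff' ψ (-((m : ℤ) + k + 1))‖) := by
    refine Summable.of_nonneg_of_le (fun m => norm_nonneg _) ?_
      ((summable_geometric_of_lt_one hq0 hq1).mul_left (‖z‖ * (Cd * Cb * (1 + q))))
    intro m
    rw [ht m]
    exact hbound m
  refine ⟨hsummable, ?_⟩
  -- evaluate the sum by telescoping
  have hsum : Summable (fun m : ℕ =>
      fourierCoeff' (fun ζ => (1 - z / ζ) / ψ ζ) ((j : ℤ) + m + 1) *
            fourierCoeff' (fun ζ => ψ ζ / (1 - z / ζ)) (-((m : ℤ) + k + 1)) -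
          fourierCoeff' (fun ζ => (ψ ζ)⁻¹) ((j : ℤ) + m + 1) *
            fourierCoeff' ψ (-((m : ℤ) + k + 1))) := hsummable.of_norm
  have hpartial : ∀ N : ℕ, ∑ m ∈ Finset.range N,
      (fourierCoeff' (fun ζ => (1 - z / ζ) / ψ ζ) ((j : ℤ) + m + 1) *
            fourierCoeff' (fun ζ => ψ ζ / (1 - z / ζ)) (-((m : ℤ) + k + 1)) -
          fourierCoeff' (fun ζ => (ψ ζ)⁻¹) ((j : ℤ) + m + 1) *
            fourierCoeff' ψ (-((m : ℤ) + k + 1))) = z * (u 0 - u N) := by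
    intro N
    have : ∀ m ∈ Finset.range N, (fourierCoeff' (fun ζ => (1 - z / ζ) / ψ ζ) ((j : ℤ) + m + 1) *
            fourierCoeff' (fun ζ => ψ ζ / (1 - z / ζ)) (-((m : ℤ) + k + 1)) -
          fourierCoeff' (fun ζ => (ψ ζ)⁻¹) ((j : ℤ) + m + 1) *
            fourierCoeff' ψ (-((m : ℤ) + k + 1))) = z * (u m - u (m + 1)) :=
      fun m _ => ht m
    rw [Finset.sum_congr rfl this, ← Finset.mul_sum, Finset.sum_range_sub']
  have hU0 : Filter.Tendsto u Filter.atTop (nhds 0) := by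
    apply squeeze_zero_norm hub
    have := (tendsto_pow_atTop_nhds_zero_of_lt_one hq0 hq1).const_mul (Cd * Cb)
    simpa using this
  have h1 := hsum.hasSum.tendsto_sum_nat
  have h2 : Filter.Tendsto (fun N : ℕ => z * (u 0 - u N)) Filter.atTop (nhds (z * u 0)) := by
    have hstep : Filter.Tendsto (fun N : ℕ => u 0 - u N) Filter.atTop (nhds (u 0 - 0)) :=
      Filter.Tendsto.sub tendsto_const_nhds hU0
    simpa using hstep.const_mul z
  have h3 : (∑' m : ℕ,
      (fourierCoeff' (fun ζ => (1 - z / ζ) / ψ ζ) ((j : ℤ) + m + 1) *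
            fourierCoeff' (fun ζ => ψ ζ / (1 - z / ζ)) (-((m : ℤ) + k + 1)) -
          fourierCoeff' (fun ζ => (ψ ζ)⁻¹) ((j : ℤ) + m + 1) *
            fourierCoeff' ψ (-((m : ℤ) + k + 1)))) = z * u 0 := by
    exact tendsto_nhds_unique (h1.congr hpartial) h2
  rw [h3, hCid (-((k : ℤ) + 1))]
  have e6 : (-((k : ℤ) + 1) + 1) = -(((0 : ℕ) : ℤ) + k) := by push_cast; ring
  rw [e6]
  simp only [hu]
  have e7 : ((j : ℤ) + ((0 : ℕ) : ℤ) + 1) = (j : ℤ) + 1 := by push_cast; ring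
  rw [e7]
  ring
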